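/- For every i in {0,...,m-1}, the relation <_{B_i} is a strict partial order on B_i (irreflexive and transitive); moreover, two vertices w,w' in B_i are incomparable in <_{B_i} if and only if N(w) = N(w'). -/

import Mathlib

open SimpleGraph

/-- `c` is a hole (induced cycle on at least 5 vertices) in `G`:
the images of consecutive indices are adjacent, and these are the only adjacencies. -/
def IsHoleEmb {V : Type*} (G : SimpleGraph V) (n : ℕ) (c : ZMod n → V) : Prop :=
  5 ≤ n ∧ Function.Injective c ∧
    ∀ i j : ZMod n, G.Adj (c i) (c j) ↔ (j = i + 1 ∨ i = j + 1)

/-- The triangle `K₃`. -/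
def graphK3 : SimpleGraph (Fin 3) := ⊤

/-- `T₂`: the star `K_{1,3}` with every edge subdivided once. -/
def graphT2 : SimpleGraph (Fin 7) :=
  SimpleGraph.fromRel (fun i j =>
    (i, j) ∈ [((0 : Fin 7), (1 : Fin 7)), (0, 2), (0, 3), (1, 4), (2, 5), (3, 6)])

/-- `X₂`: a 4-cycle `0 1 2 3` with pendant vertices `4, 5, 6` attached at `0, 1, 2`. -/
def graphX2 : SimpleGraph (Fin 7) :=
  SimpleGraph.fromRel (fun i j =>
    (i, j) ∈ [((0 : Fin 7), (1 : Fin 7)), (1, 2), (2, 3), (3, 0), (0, 4), (1, 5), (2, 6)])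

/-- `X₃`: a path `0 1 2 3 4`, a vertex `5` adjacent to `0, 2, 4`, and a pendant `6` at `5`. -/
def graphX3 : SimpleGraph (Fin 7) :=
  SimpleGraph.fromRel (fun i j =>
    (i, j) ∈ [((0 : Fin 7), (1 : Fin 7)), (1, 2), (2, 3), (3, 4), (5, 0), (5, 2), (5, 4), (5, 6)])

/-- The cycle `C_n` on `ZMod n`. -/
def cycleG (n : ℕ) : SimpleGraph (ZMod n) :=
  SimpleGraph.fromRel (fun i j => j = i + 1)

/-- `G` contains an induced copy of `H`. -/
def ContainsInduced {W V : Type*} (H : SimpleGraph W) (G : SimpleGraph V) : Prop :=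
  Nonempty (H ↪g G)

/-- An almost bipartite permutation graph: no induced `K₃`, `T₂`, `X₂`, `X₃`,
nor `C_k` for `k ∈ {5,…,9}`. -/
def AlmostBPG {V : Type*} (G : SimpleGraph V) : Prop :=
  ¬ ContainsInduced graphK3 G ∧ ¬ ContainsInduced graphT2 G ∧
    ¬ ContainsInduced graphX2 G ∧ ¬ ContainsInduced graphX3 G ∧
    ∀ k : ℕ, 5 ≤ k → k ≤ 9 → ¬ ContainsInduced (cycleG k) G

/-- `c` is a shortest hole in `G`. -/
def ShortestHole {V : Type*} (G : SimpleGraph V) (m : ℕ) (c : ZMod m → V) : Prop :=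
  IsHoleEmb G m c ∧ ∀ (n : ℕ) (c' : ZMod n → V), IsHoleEmb G n c' → m ≤ n

/-- `A_i = {v : N(v) ∩ C = {c_{i-1}, c_{i+1}}}`. -/
def Ai {V : Type*} (G : SimpleGraph V) (m : ℕ) (c : ZMod m → V) (i : ZMod m) : Set V :=
  {v | G.neighborSet v ∩ Set.range c = {c (i - 1), c (i + 1)}}

/-- `B_i = {v : N(v) ∩ C = {c_i}}`. -/
def Bi {V : Type*} (G : SimpleGraph V) (m : ℕ) (c : ZMod m → V) (i : ZMod m) : Set V :=
  {v | G.neighborSet v ∩ Set.range c = {c i}}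

/-- `A[i,j] = A_i ∪ B_{i+1} ∪ A_{i+2} ∪ …` for integers `i ≤ j`. -/
def Ablk {V : Type*} (G : SimpleGraph V) (m : ℕ) (c : ZMod m → V) (i j : ℤ) : Set V :=
  {v | ∃ k : ℤ, i ≤ k ∧ k ≤ j ∧
    ((Even (k - i) ∧ v ∈ Ai G m c (k : ZMod m)) ∨ (Odd (k - i) ∧ v ∈ Bi G m c (k : ZMod m)))}

/-- `B[i,j] = B_i ∪ A_{i+1} ∪ B_{i+2} ∪ …` for integers `i ≤ j`. -/
def Bblk {V : Type*} (G : SimpleGraph V) (m : ℕ) (c : ZMod m → V) (i j : ℤ) : Set V :=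
  {v | ∃ k : ℤ, i ≤ k ∧ k ≤ j ∧
    ((Even (k - i) ∧ v ∈ Bi G m c (k : ZMod m)) ∨ (Odd (k - i) ∧ v ∈ Ai G m c (k : ZMod m)))}

/-- `V[i,j] = A[i,j] ∪ B[i,j]`. -/
def Vblk {V : Type*} (G : SimpleGraph V) (m : ℕ) (c : ZMod m → V) (i j : ℤ) : Set V :=
  Ablk G m c i j ∪ Bblk G m c i j

/-- The relation `<_{A_i}`. -/
def ltA {V : Type*} (G : SimpleGraph V) (m : ℕ) (c : ZMod m → V) (i : ZMod m)
    (u u' : V) : Prop :=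
  (∃ w ∈ Bi G m c (i - 2) ∪ Ai G m c (i - 1), G.Adj w u ∧ ¬ G.Adj w u') ∨
  (∃ w ∈ Ai G m c (i + 1) ∪ Bi G m c (i + 2), G.Adj w u' ∧ ¬ G.Adj w u)

/-- The relation `<_{B_i}`. -/
def ltB {V : Type*} (G : SimpleGraph V) (m : ℕ) (c : ZMod m → V) (i : ZMod m)
    (w w' : V) : Prop :=
  (∃ u ∈ Ai G m c (i - 2) ∪ Bi G m c (i - 1), G.Adj u w ∧ ¬ G.Adj u w') ∨
  (∃ u ∈ Bi G m c (i + 1) ∪ Ai G m c (i + 2), G.Adj u w' ∧ ¬ G.Adj u w)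

/-- `r` is a strict linear order on the set `S`. -/
def IsStrictLinearOrderOn {V : Type*} (S : Set V) (r : V → V → Prop) : Prop :=
  (∀ a ∈ S, ¬ r a a) ∧
    (∀ a ∈ S, ∀ b ∈ S, ∀ d ∈ S, r a b → r b d → r a d) ∧
    (∀ a ∈ S, ∀ b ∈ S, a ≠ b → r a b ∨ r b a)

/-- `L` extends `r` on the set `S`. -/
def ExtendsOn {V : Type*} (S : Set V) (r L : V → V → Prop) : Prop :=
  ∀ a ∈ S, ∀ b ∈ S, r a b → L a b

/-- `v` is the maximum of `(S, L)`. -/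
def IsMaxOf {V : Type*} (S : Set V) (L : V → V → Prop) (v : V) : Prop :=
  v ∈ S ∧ ∀ z ∈ S, z ≠ v → L z v

/-- `v` is the minimum of `(S, L)`. -/
def IsMinOf {V : Type*} (S : Set V) (L : V → V → Prop) (v : V) : Prop :=
  v ∈ S ∧ ∀ z ∈ S, z ≠ v → L v z

/-- `v, v'` belong to `S`, `L v v'`, and they are consecutive in `(S, L)`. -/
def ConsecIn {V : Type*} (S : Set V) (L : V → V → Prop) (v v' : V) : Prop :=
  v ∈ S ∧ v' ∈ S ∧ L v v' ∧ ¬ ∃ z ∈ S, L v z ∧ L z v'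

/-- The relation `≺` built from the chosen linear orders `LA i` on `A_i` and `LB i` on `B_i`. -/
def precRel {V : Type*} (G : SimpleGraph V) (m : ℕ) (c : ZMod m → V)
    (LA LB : ZMod m → V → V → Prop) (v v' : V) : Prop :=
  ∃ i : ZMod m,
    ConsecIn (Ai G m c i) (LA i) v v' ∨
    ConsecIn (Bi G m c i) (LB i) v v' ∨
    (IsMaxOf (Ai G m c i) (LA i) v ∧ IsMinOf (Bi G m c (i + 1)) (LB (i + 1)) v') ∨
    (IsMaxOf (Bi G m c i) (LB i) v ∧ IsMinOf (Ai G m c (i + 1)) (LA (i + 1)) v')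

/-- `<_{V'}`: the transitive closure of `≺` restricted to `V'`. -/
def ltOn {V : Type*} (G : SimpleGraph V) (m : ℕ) (c : ZMod m → V)
    (LA LB : ZMod m → V → V → Prop) (V' : Set V) : V → V → Prop :=
  Relation.TransGen (fun a b => a ∈ V' ∧ b ∈ V' ∧ precRel G m c LA LB a b)

/-- The relation `<_cl`. -/
def ltCl {V : Type*} (G : SimpleGraph V) (m : ℕ) (c : ZMod m → V)
    (LA LB : ZMod m → V → V → Prop) (v v' : V) : Prop :=
  ∃ i : ℕ, i < m ∧
    ((v ∈ Ablk G m c ((i : ℤ) - 2) ((i : ℤ) + 2) ∧ v' ∈ Ablk G m c ((i : ℤ) - 2) ((i : ℤ) + 2) ∧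
        ltOn G m c LA LB (Ablk G m c ((i : ℤ) - 2) ((i : ℤ) + 2)) v v') ∨
      (v ∈ Bblk G m c ((i : ℤ) - 2) ((i : ℤ) + 2) ∧ v' ∈ Bblk G m c ((i : ℤ) - 2) ((i : ℤ) + 2) ∧
        ltOn G m c LA LB (Bblk G m c ((i : ℤ) - 2) ((i : ℤ) + 2)) v v'))

/-- `r` is a transitive orientation of `G`. -/
def IsTransOrient {V : Type*} (G : SimpleGraph V) (r : V → V → Prop) : Prop :=
  (∀ v, ¬ r v v) ∧ (∀ a b d, r a b → r b d → r a d) ∧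
    ∀ u v, u ≠ v → ((r u v ∨ r v u) ↔ G.Adj u v)

/-- A permutation graph: both `G` and its complement admit transitive orientations. -/
def IsPermGraph {V : Type*} (G : SimpleGraph V) : Prop :=
  (∃ r, IsTransOrient G r) ∧ ∃ r, IsTransOrient Gᶜ r

/-- A bipartite permutation graph. -/
def IsBPG {V : Type*} (G : SimpleGraph V) : Prop :=
  G.Colorable 2 ∧ IsPermGraph G

/-- `X` is a hole cut of `G`: `G - X` is a bipartite permutation graph. -/
def IsHoleCut {V : Type*} (G : SimpleGraph V) (X : Set V) : Prop :=
  IsBPG (G.induce Xᶜ)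

/-- The adjacency property: for every `u ∈ U`, `N(u)` consists of vertices
consecutive in `(W, r)`. -/
def AdjProperty {V : Type*} (G : SimpleGraph V) (U W : Set V) (r : V → V → Prop) : Prop :=
  ∀ u ∈ U, ∀ w ∈ W, ∀ w' ∈ W, ∀ w'' ∈ W,
    r w w' → r w' w'' → G.Adj u w → G.Adj u w'' → G.Adj u w'

/-- The enclosure property: for `u, u' ∈ U` with `N(u) ⊆ N(u')`, the set `N(u') \ N(u)`
consists of vertices consecutive in `(W, r)`. -/
def EncProperty {V : Type*} (G : SimpleGraph V) (U W : Set V) (r : V → V → Prop) : Prop :=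
  ∀ u ∈ U, ∀ u' ∈ U, G.neighborSet u ∩ W ⊆ G.neighborSet u' ∩ W →
    ∀ w ∈ W, ∀ w' ∈ W, ∀ w'' ∈ W, r w w' → r w' w'' →
      (G.Adj u' w ∧ ¬ G.Adj u w) → (G.Adj u' w'' ∧ ¬ G.Adj u w'') →
        (G.Adj u' w' ∧ ¬ G.Adj u w')

/-- `(U, rU)` and `(W, rW)` form a strong ordering of `U ∪ W`. -/
def StrongOrdering {V : Type*} (G : SimpleGraph V) (U W : Set V)
    (rU rW : V → V → Prop) : Prop :=
  ∀ u ∈ U, ∀ u' ∈ U, ∀ w ∈ W, ∀ w' ∈ W,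
    G.Adj u w' → G.Adj u' w → rU u u' → rW w w' → G.Adj u w ∧ G.Adj u' w'

/-- `S` induces in `G` one of the graphs `K₃, T₂, X₂, X₃, C₅, …, C₉`. -/
def IsForbiddenSet {V : Type*} (G : SimpleGraph V) (S : Set V) : Prop :=
  Nonempty (graphK3 ≃g G.induce S) ∨ Nonempty (graphT2 ≃g G.induce S) ∨
    Nonempty (graphX2 ≃g G.induce S) ∨ Nonempty (graphX3 ≃g G.induce S) ∨
    ∃ k : ℕ, 5 ≤ k ∧ k ≤ 9 ∧ Nonempty (cycleG k ≃g G.induce S)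


section Helpers
variable {V : Type*} {G : SimpleGraph V}

lemma no_K3 (hK3 : ¬ ContainsInduced graphK3 G) {a b d : V}
    (hab : G.Adj a b) (had : G.Adj a d) (hbd : G.Adj b d) : False := by
  apply hK3
  refine ⟨⟨⟨![a, b, d], ?_⟩, ?_⟩⟩
  · intro x y hxy
    fin_cases x <;> fin_cases y <;> simp at hxy ⊢ <;> first
      | (exact absurd hxy (by first | exact hab.ne | exact had.ne | exact hbd.ne))
      | (exact absurd hxy.symm (by first | exact hab.ne | exact had.ne | exact hbd.ne))
  · intro x y
    have hba := hab.symm; have hda := had.symm; have hdb := hbd.symm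
    fin_cases x <;> fin_cases y <;>
      simp only [graphK3, Matrix.cons_val_zero, Matrix.cons_val_one, Matrix.head_cons,
        Matrix.cons_val_succ, SimpleGraph.top_adj] <;>
      simp (config := { decide := true }) <;> first
        | assumption
        | exact G.irrefl

lemma triangle_free (hK3 : ¬ ContainsInduced graphK3 G) :
    ∀ {a b d : V}, G.Adj a b → G.Adj a d → G.Adj b d → False := fun h1 h2 h3 => no_K3 hK3 h1 h2 h3

set_option maxHeartbeats 1600000 in
lemma no_T2 (hT2 : ¬ ContainsInduced graphT2 G)
    (v0 v1 v2 v3 v4 v5 v6 : V)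
    (e01 : G.Adj v0 v1) (e02 : G.Adj v0 v2) (e03 : G.Adj v0 v3)
    (e14 : G.Adj v1 v4) (e25 : G.Adj v2 v5) (e36 : G.Adj v3 v6)
    (n04 : ¬ G.Adj v0 v4) (n05 : ¬ G.Adj v0 v5) (n06 : ¬ G.Adj v0 v6)
    (n12 : ¬ G.Adj v1 v2) (n13 : ¬ G.Adj v1 v3) (n15 : ¬ G.Adj v1 v5)
    (n16 : ¬ G.Adj v1 v6) (n23 : ¬ G.Adj v2 v3) (n24 : ¬ G.Adj v2 v4)
    (n26 : ¬ G.Adj v2 v6) (n34 : ¬ G.Adj v3 v4) (n35 : ¬ G.Adj v3 v5)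
    (n45 : ¬ G.Adj v4 v5) (n46 : ¬ G.Adj v4 v6) (n56 : ¬ G.Adj v5 v6) : False := by
  have e10 := e01.symm; have e20 := e02.symm; have e30 := e03.symm
  have e41 := e14.symm; have e52 := e25.symm; have e63 := e36.symm
  have n40 := fun h => n04 (G.adj_symm h); have n50 := fun h => n05 (G.adj_symm h)
  have n60 := fun h => n06 (G.adj_symm h); have n21 := fun h => n12 (G.adj_symm h)
  have n31 := fun h => n13 (G.adj_symm h); have n51 := fun h => n15 (G.adj_symm h)
  have n61 := fun h => n16 (G.adj_symm h); have n32 := fun h => n23 (G.adj_symm h)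
  have n42 := fun h => n24 (G.adj_symm h); have n62 := fun h => n26 (G.adj_symm h)
  have n43 := fun h => n34 (G.adj_symm h); have n53 := fun h => n35 (G.adj_symm h)
  have n54 := fun h => n45 (G.adj_symm h); have n64 := fun h => n46 (G.adj_symm h)
  have n65 := fun h => n56 (G.adj_symm h)
  have d01 : v0 ≠ v1 := e01.ne
  have d02 : v0 ≠ v2 := e02.ne
  have d03 : v0 ≠ v3 := e03.ne
  have d04 : v0 ≠ v4 := fun h => n24 (h ▸ e02.symm)
  have d05 : v0 ≠ v5 := fun h => n15 (h ▸ e01.symm)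
  have d06 : v0 ≠ v6 := fun h => n16 (h ▸ e01.symm)
  have d12 : v1 ≠ v2 := fun h => n24 (h ▸ e14)
  have d13 : v1 ≠ v3 := fun h => n34 (h ▸ e14)
  have d14 : v1 ≠ v4 := e14.ne
  have d15 : v1 ≠ v5 := fun h => n05 (h ▸ e01)
  have d16 : v1 ≠ v6 := fun h => n06 (h ▸ e01)
  have d23 : v2 ≠ v3 := fun h => n35 (h ▸ e25)
  have d24 : v2 ≠ v4 := fun h => n04 (h ▸ e02)
  have d25 : v2 ≠ v5 := e25.ne
  have d26 : v2 ≠ v6 := fun h => n06 (h ▸ e02)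
  have d34 : v3 ≠ v4 := fun h => n04 (h ▸ e03)
  have d35 : v3 ≠ v5 := fun h => n05 (h ▸ e03)
  have d36 : v3 ≠ v6 := e36.ne
  have d45 : v4 ≠ v5 := fun h => n15 (h ▸ e14)
  have d46 : v4 ≠ v6 := fun h => n16 (h ▸ e14)
  have d56 : v5 ≠ v6 := fun h => n26 (h ▸ e25)
  apply hT2
  refine ⟨⟨⟨![v0,v1,v2,v3,v4,v5,v6], ?_⟩, ?_⟩⟩
  · intro a b hab
    fin_cases a <;> fin_cases b <;> simp at hab ⊢ <;> first
      | (exact absurd hab (by assumption))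
      | (exact absurd hab.symm (by assumption))
  · intro a b
    fin_cases a <;> fin_cases b <;>
      simp only [graphT2, SimpleGraph.fromRel_adj, Matrix.cons_val_zero, Matrix.cons_val_one,
        Matrix.head_cons, Matrix.cons_val_succ] <;>
      simp (config := { decide := true }) <;> assumption

set_option maxHeartbeats 1600000 in
lemma no_X2 (hX2 : ¬ ContainsInduced graphX2 G)
    (v0 v1 v2 v3 v4 v5 v6 : V)
    (e01 : G.Adj v0 v1) (e12 : G.Adj v1 v2) (e23 : G.Adj v2 v3)
    (e03 : G.Adj v0 v3) (e04 : G.Adj v0 v4) (e15 : G.Adj v1 v5) (e26 : G.Adj v2 v6)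
    (n02 : ¬ G.Adj v0 v2) (n05 : ¬ G.Adj v0 v5) (n06 : ¬ G.Adj v0 v6)
    (n13 : ¬ G.Adj v1 v3) (n14 : ¬ G.Adj v1 v4) (n16 : ¬ G.Adj v1 v6)
    (n24 : ¬ G.Adj v2 v4) (n25 : ¬ G.Adj v2 v5) (n34 : ¬ G.Adj v3 v4)
    (n35 : ¬ G.Adj v3 v5) (n36 : ¬ G.Adj v3 v6) (n45 : ¬ G.Adj v4 v5)
    (n46 : ¬ G.Adj v4 v6) (n56 : ¬ G.Adj v5 v6) : False := by
  have e10 := e01.symm; have e21 := e12.symm; have e32 := e23.symm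
  have e30 := e03.symm; have e40 := e04.symm; have e51 := e15.symm; have e62 := e26.symm
  have n20 := fun h => n02 (G.adj_symm h); have n50 := fun h => n05 (G.adj_symm h)
  have n60 := fun h => n06 (G.adj_symm h); have n31 := fun h => n13 (G.adj_symm h)
  have n41 := fun h => n14 (G.adj_symm h); have n61 := fun h => n16 (G.adj_symm h)
  have n42 := fun h => n24 (G.adj_symm h); have n52 := fun h => n25 (G.adj_symm h)
  have n43 := fun h => n34 (G.adj_symm h); have n53 := fun h => n35 (G.adj_symm h)
  have n63 := fun h => n36 (G.adj_symm h); have n54 := fun h => n45 (G.adj_symm h)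
  have n64 := fun h => n46 (G.adj_symm h); have n65 := fun h => n56 (G.adj_symm h)
  have d01 : v0 ≠ v1 := e01.ne
  have d12 : v1 ≠ v2 := e12.ne
  have d23 : v2 ≠ v3 := e23.ne
  have d03 : v0 ≠ v3 := e03.ne
  have d04 : v0 ≠ v4 := e04.ne
  have d15 : v1 ≠ v5 := e15.ne
  have d26 : v2 ≠ v6 := e26.ne
  have d02 : v0 ≠ v2 := fun h => n24 (h ▸ e04)
  have d05 : v0 ≠ v5 := fun h => n35 (h ▸ e03).symm
  have d06 : v0 ≠ v6 := fun h => n46 (h ▸ e04).symm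
  have d13 : v1 ≠ v3 := fun h => n35 (h ▸ e15)
  have d14 : v1 ≠ v4 := fun h => n24 (h ▸ e12).symm
  have d16 : v1 ≠ v6 := fun h => n06 (h ▸ e01)
  have d24 : v2 ≠ v4 := fun h => n34 (h ▸ e23).symm
  have d25 : v2 ≠ v5 := fun h => n35 (h ▸ e23).symm
  have d34 : v3 ≠ v4 := fun h => n24 (h ▸ e23)
  have d35 : v3 ≠ v5 := fun h => n25 (h ▸ e23)
  have d36 : v3 ≠ v6 := fun h => n06 (h ▸ e03)
  have d45 : v4 ≠ v5 := fun h => n05 (h ▸ e04)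
  have d46 : v4 ≠ v6 := fun h => n06 (h ▸ e04)
  have d56 : v5 ≠ v6 := fun h => n16 (h ▸ e15)
  apply hX2
  refine ⟨⟨⟨![v0,v1,v2,v3,v4,v5,v6], ?_⟩, ?_⟩⟩
  · intro a b hab
    fin_cases a <;> fin_cases b <;> simp at hab ⊢ <;> first
      | (exact absurd hab (by assumption))
      | (exact absurd hab.symm (by assumption))
  · intro a b
    fin_cases a <;> fin_cases b <;>
      simp only [graphX2, SimpleGraph.fromRel_adj, Matrix.cons_val_zero, Matrix.cons_val_one,
        Matrix.head_cons, Matrix.cons_val_succ] <;>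
      simp (config := { decide := true }) <;> assumption

set_option maxHeartbeats 1600000 in
lemma no_X3 (hX3 : ¬ ContainsInduced graphX3 G)
    (v0 v1 v2 v3 v4 v5 v6 : V)
    (e01 : G.Adj v0 v1) (e12 : G.Adj v1 v2) (e23 : G.Adj v2 v3) (e34 : G.Adj v3 v4)
    (e05 : G.Adj v0 v5) (e25 : G.Adj v2 v5) (e45 : G.Adj v4 v5) (e56 : G.Adj v5 v6)
    (n02 : ¬ G.Adj v0 v2) (n03 : ¬ G.Adj v0 v3) (n04 : ¬ G.Adj v0 v4)
    (n06 : ¬ G.Adj v0 v6) (n13 : ¬ G.Adj v1 v3) (n14 : ¬ G.Adj v1 v4)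
    (n15 : ¬ G.Adj v1 v5) (n16 : ¬ G.Adj v1 v6) (n24 : ¬ G.Adj v2 v4)
    (n26 : ¬ G.Adj v2 v6) (n35 : ¬ G.Adj v3 v5) (n36 : ¬ G.Adj v3 v6)
    (n46 : ¬ G.Adj v4 v6) : False := by
  have e10 := e01.symm; have e21 := e12.symm; have e32 := e23.symm; have e43 := e34.symm
  have e50 := e05.symm; have e52 := e25.symm; have e54 := e45.symm; have e65 := e56.symm
  have n20 := fun h => n02 (G.adj_symm h); have n30 := fun h => n03 (G.adj_symm h)
  have n40 := fun h => n04 (G.adj_symm h); have n60 := fun h => n06 (G.adj_symm h)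
  have n31 := fun h => n13 (G.adj_symm h); have n41 := fun h => n14 (G.adj_symm h)
  have n51 := fun h => n15 (G.adj_symm h); have n61 := fun h => n16 (G.adj_symm h)
  have n42 := fun h => n24 (G.adj_symm h); have n62 := fun h => n26 (G.adj_symm h)
  have n53 := fun h => n35 (G.adj_symm h); have n63 := fun h => n36 (G.adj_symm h)
  have n64 := fun h => n46 (G.adj_symm h)
  have d01 : v0 ≠ v1 := e01.ne
  have d12 : v1 ≠ v2 := e12.ne
  have d23 : v2 ≠ v3 := e23.ne
  have d34 : v3 ≠ v4 := e34.ne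
  have d05 : v0 ≠ v5 := e05.ne
  have d25 : v2 ≠ v5 := e25.ne
  have d45 : v4 ≠ v5 := e45.ne
  have d56 : v5 ≠ v6 := e56.ne
  have d02 : v0 ≠ v2 := fun h => n03 (h.symm ▸ e23)
  have d03 : v0 ≠ v3 := fun h => n04 (h.symm ▸ e34)
  have d04 : v0 ≠ v4 := fun h => n03 (h.symm ▸ e34).symm
  have d06 : v0 ≠ v6 := fun h => n16 (h ▸ e01).symm
  have d13 : v1 ≠ v3 := fun h => n03 (h ▸ e01)
  have d14 : v1 ≠ v4 := fun h => n04 (h ▸ e01)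
  have d15 : v1 ≠ v5 := fun h => n16 (h.symm ▸ e56)
  have d16 : v1 ≠ v6 := fun h => n06 (h ▸ e01)
  have d24 : v2 ≠ v4 := fun h => n14 (h ▸ e12)
  have d26 : v2 ≠ v6 := fun h => n16 (h ▸ e12)
  have d35 : v3 ≠ v5 := fun h => n03 (h.symm ▸ e05)
  have d36 : v3 ≠ v6 := fun h => n26 (h ▸ e23)
  have d46 : v4 ≠ v6 := fun h => n36 (h ▸ e34)
  apply hX3
  refine ⟨⟨⟨![v0,v1,v2,v3,v4,v5,v6], ?_⟩, ?_⟩⟩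
  · intro a b hab
    fin_cases a <;> fin_cases b <;> simp at hab ⊢ <;> first
      | (exact absurd hab (by assumption))
      | (exact absurd hab.symm (by assumption))
  · intro a b
    fin_cases a <;> fin_cases b <;>
      simp only [graphX3, SimpleGraph.fromRel_adj, Matrix.cons_val_zero, Matrix.cons_val_one,
        Matrix.head_cons, Matrix.cons_val_succ] <;>
      simp (config := { decide := true }) <;> assumption

end Helpers
section Holes
variable {V : Type*} {G : SimpleGraph V} {m : ℕ} {c : ZMod m → V}

lemma zmod_succ_iff {n : ℕ} (hn : 2 ≤ n) (a b : ZMod n) :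
    b = a + 1 ↔ (b.val = a.val + 1 ∨ (a.val + 1 = n ∧ b.val = 0)) := by
  haveI : NeZero n := ⟨by omega⟩
  have hv1 : (1 : ZMod n).val = 1 := ZMod.val_one'' (by omega)
  have ha := ZMod.val_lt a
  have hb := ZMod.val_lt b
  constructor
  · rintro rfl
    rw [ZMod.val_add, hv1]
    rcases Nat.lt_or_ge (a.val + 1) n with h | h
    · left; rw [Nat.mod_eq_of_lt h]
    · have h' : a.val + 1 = n := by omega
      exact Or.inr ⟨h', by rw [h', Nat.mod_self]⟩
  · intro h
    apply ZMod.val_injective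
    rw [ZMod.val_add, hv1]
    rcases h with h | ⟨h1, h2⟩
    · rw [Nat.mod_eq_of_lt (by omega), h]
    · rw [h1, Nat.mod_self, h2]

lemma hole_from_fn (hC : ShortestHole G m c)
    (n : ℕ) (hn5 : 5 ≤ n) (hnm : n < m) (g : ℕ → V)
    (hinj : ∀ k l, k < n → l < n → g k = g l → k = l)
    (hadj : ∀ k l, k < n → l < n →
      (G.Adj (g k) (g l) ↔ (l = k + 1 ∨ k = l + 1 ∨ (k = 0 ∧ l + 1 = n) ∨ (l = 0 ∧ k + 1 = n)))) :
    False := by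
  haveI : NeZero n := ⟨by omega⟩
  have finj : Function.Injective (fun a : ZMod n => g a.val) := by
    intro a b h
    exact ZMod.val_injective n (hinj _ _ (ZMod.val_lt a) (ZMod.val_lt b) h)
  have fadj : ∀ a b : ZMod n, G.Adj (g a.val) (g b.val) ↔ (b = a + 1 ∨ a = b + 1) := by
    intro a b
    rw [hadj _ _ (ZMod.val_lt a) (ZMod.val_lt b), zmod_succ_iff (by omega),
      zmod_succ_iff (by omega)]
    have ha := ZMod.val_lt a
    have hb := ZMod.val_lt b
    omega
  have : IsHoleEmb G n (fun a : ZMod n => g a.val) := ⟨hn5, finj, fadj⟩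
  have := hC.2 n _ this
  omega

/-- arc with one extra vertex `z`: `z, e 0, e 1, ..., e d` is a hole of length `d+2`. -/
lemma arc_z (hC : ShortestHole G m c)
    (d : ℕ) (h3 : 3 ≤ d) (hdm : d + 3 ≤ m) (e : ℕ → V)
    (hinj : ∀ k l, k ≤ d → l ≤ d → e k = e l → k = l)
    (headj : ∀ k l, k ≤ d → l ≤ d → (G.Adj (e k) (e l) ↔ (l = k + 1 ∨ k = l + 1)))
    (z : V) (hz0 : G.Adj z (e 0)) (hzd : G.Adj z (e d))
    (hzint : ∀ k, 0 < k → k < d → ¬ G.Adj z (e k))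
    (hzne : ∀ k, k ≤ d → z ≠ e k) : False := by
  set n := d + 2 with hn
  set g : ℕ → V := fun k => if k ≤ d then e k else z with hg
  have hge : ∀ k, k ≤ d → g k = e k := fun k hk => if_pos hk
  have hgz : g (d + 1) = z := if_neg (by omega)
  have hea : ∀ k l, k ≤ d → l ≤ d → (G.Adj (g k) (g l) ↔ (l = k + 1 ∨ k = l + 1)) := by
    intro k l hk hl; rw [hge k hk, hge l hl]; exact headj k l hk hl
  have hza : ∀ k, k ≤ d → (G.Adj (g k) (g (d + 1)) ↔ (k = 0 ∨ k = d)) := by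
    intro k hk
    rw [hge k hk, hgz]
    constructor
    · intro h
      by_contra hc
      push_neg at hc
      exact hzint k (by omega) (by omega) h.symm
    · rintro (rfl | rfl)
      · exact hz0.symm
      · exact hzd.symm
  apply hole_from_fn hC n (by omega) (by omega) g
  · intro k l hk hl h
    by_cases h1 : k ≤ d <;> by_cases h2 : l ≤ d
    · exact hinj _ _ h1 h2 ((hge k h1) ▸ (hge l h2) ▸ h)
    · have hl' : l = d + 1 := by omega
      rw [hge k h1, hl', hgz] at h
      exact absurd h.symm (hzne k h1)
    · have hk' : k = d + 1 := by omega
      rw [hge l h2, hk', hgz] at h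
      exact absurd h (hzne l h2)
    · omega
  · have key : ∀ k l, k < n → l < n → k < l →
        (G.Adj (g k) (g l) ↔
          (l = k + 1 ∨ k = l + 1 ∨ (k = 0 ∧ l + 1 = n) ∨ (l = 0 ∧ k + 1 = n))) := by
      intro k l hk hl hkl
      by_cases h2 : l ≤ d
      · rw [hea k l (by omega) h2]; omega
      · have hl' : l = d + 1 := by omega
        subst hl'
        rw [hza k (by omega)]; omega
    intro k l hk hl
    rcases Nat.lt_trichotomy k l with h | rfl | h
    · exact key k l hk hl h
    · constructor
      · intro h; exact absurd h G.irrefl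
      · intro h; omega
    · rw [G.adj_comm, key l k hl hk h]; omega

/-- arc with two extra vertices: `w, e 0, ..., e d, z, w` is a hole of length `d+3`. -/
lemma arc_wz (hC : ShortestHole G m c)
    (d : ℕ) (h2d : 2 ≤ d) (hdm : d + 4 ≤ m) (e : ℕ → V)
    (hinj : ∀ k l, k ≤ d → l ≤ d → e k = e l → k = l)
    (headj : ∀ k l, k ≤ d → l ≤ d → (G.Adj (e k) (e l) ↔ (l = k + 1 ∨ k = l + 1)))
    (w z : V) (hw0 : G.Adj w (e 0)) (hzd : G.Adj z (e d)) (hwz : G.Adj w z)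
    (hwint : ∀ k, 0 < k → k ≤ d → ¬ G.Adj w (e k))
    (hzint : ∀ k, k < d → ¬ G.Adj z (e k))
    (hwne : ∀ k, k ≤ d → w ≠ e k) (hzne : ∀ k, k ≤ d → z ≠ e k) : False := by
  have hwz' : w ≠ z := hwz.ne
  set n := d + 3 with hn
  set g : ℕ → V := fun k => if k ≤ d then e k else if k = d + 1 then z else w with hg
  have hge : ∀ k, k ≤ d → g k = e k := fun k hk => if_pos hk
  have hgz : g (d + 1) = z := by
    show (if d + 1 ≤ d then e (d+1) else if d + 1 = d + 1 then z else w) = z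
    rw [if_neg (by omega : ¬ d + 1 ≤ d), if_pos rfl]
  have hgw : g (d + 2) = w := by
    show (if d + 2 ≤ d then e (d+2) else if d + 2 = d + 1 then z else w) = w
    rw [if_neg (by omega : ¬ d + 2 ≤ d), if_neg (by omega : ¬ d + 2 = d + 1)]
  apply hole_from_fn hC n (by omega) (by omega) g
  · intro k l hk hl h
    by_cases h1 : k ≤ d <;> by_cases h2 : l ≤ d
    · exact hinj _ _ h1 h2 ((hge k h1) ▸ (hge l h2) ▸ h)
    · rcases (by omega : l = d + 1 ∨ l = d + 2) with rfl | rfl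
      · rw [hge k h1, hgz] at h; exact absurd h.symm (hzne k h1)
      · rw [hge k h1, hgw] at h; exact absurd h.symm (hwne k h1)
    · rcases (by omega : k = d + 1 ∨ k = d + 2) with rfl | rfl
      · rw [hge l h2, hgz] at h; exact absurd h (hzne l h2)
      · rw [hge l h2, hgw] at h; exact absurd h (hwne l h2)
    · rcases (by omega : k = d + 1 ∨ k = d + 2) with rfl | rfl <;>
        rcases (by omega : l = d + 1 ∨ l = d + 2) with rfl | rfl
      · rfl
      · rw [hgz, hgw] at h; exact absurd h.symm hwz'
      · rw [hgz, hgw] at h; exact absurd h hwz'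
      · rfl
  · have key : ∀ k l, k < n → l < n → k < l →
        (G.Adj (g k) (g l) ↔
          (l = k + 1 ∨ k = l + 1 ∨ (k = 0 ∧ l + 1 = n) ∨ (l = 0 ∧ k + 1 = n))) := by
      intro k l hk hl hkl
      by_cases h2 : l ≤ d
      · rw [hge k (by omega), hge l h2, headj k l (by omega) h2]; omega
      · rcases (by omega : l = d + 1 ∨ l = d + 2) with rfl | rfl
        · -- l = d + 1 : vertex z
          rw [hge k (by omega), hgz]
          constructor
          · intro h
            by_cases hkd : k = d
            · omega
            · exact absurd h.symm (hzint k (by omega))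
          · intro h
            have : k = d := by omega
            subst this; exact hzd.symm
        · -- l = d + 2 : vertex w
          by_cases h1 : k ≤ d
          · rw [hge k h1, hgw]
            constructor
            · intro h
              rcases Nat.eq_zero_or_pos k with rfl | hk0
              · omega
              · exact absurd h.symm (hwint k hk0 h1)
            · intro h
              have : k = 0 := by omega
              subst this; exact hw0.symm
          · have : k = d + 1 := by omega
            subst this
            rw [hgz, hgw]
            constructor
            · intro _; omega
            · intro _; exact hwz.symm
    intro k l hk hl
    rcases Nat.lt_trichotomy k l with h | rfl | h
    · exact key k l hk hl h
    · constructor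
      · intro h; exact absurd h G.irrefl
      · intro h; omega
    · rw [G.adj_comm, key l k hl hk h]; omega

end Holes
section Window
variable {V : Type*} {G : SimpleGraph V} {m : ℕ} {c : ZMod m → V}

lemma cast_inj_small (hm : 10 ≤ m) {a b : ℕ} (ha : a < m) (hb : b < m) :
    ((a : ZMod m) = (b : ZMod m)) ↔ a = b := by
  haveI : NeZero m := ⟨by omega⟩
  constructor
  · intro h
    have := congrArg ZMod.val h
    rwa [ZMod.val_cast_of_lt ha, ZMod.val_cast_of_lt hb] at this
  · rintro rfl; rfl

lemma cast_succ_iff (hm : 10 ≤ m) {a b : ℕ} (ha : a < m) (hb : b < m) :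
    ((b : ZMod m) = (a : ZMod m) + 1) ↔ (b = a + 1 ∨ (a + 1 = m ∧ b = 0)) := by
  have h1 : (a : ZMod m) + 1 = ((a + 1 : ℕ) : ZMod m) := by push_cast; ring
  rcases Nat.lt_or_ge (a + 1) m with h | h
  · rw [h1, cast_inj_small hm hb h]; omega
  · have h2 : a + 1 = m := by omega
    have h3 : ((a + 1 : ℕ) : ZMod m) = ((0 : ℕ) : ZMod m) := by
      rw [h2]; simp
    rw [h1, h3, cast_inj_small hm hb (by omega)]
    omega

lemma cast_neg_nat (hm : 10 ≤ m) {a : ℕ} (ha : a ≤ m) :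
    ((m - a : ℕ) : ZMod m) = -(a : ℕ) := by
  have : ((m - a : ℕ) : ZMod m) = ((m : ℕ) : ZMod m) - (a : ℕ) := by
    push_cast [Nat.cast_sub ha]; ring
  rw [this]; simp

section WithHole
variable (hm : 10 ≤ m) (cinj : Function.Injective c)
  (cadj : ∀ x y : ZMod m, G.Adj (c x) (c y) ↔ (y = x + 1 ∨ x = y + 1))

include hm cinj in
lemma off_inj {i : ZMod m} {a b : ℕ} (ha : a < m) (hb : b < m)
    (h : c (i + a) = c (i + b)) : a = b :=
  (cast_inj_small hm ha hb).mp (by have := cinj h; exact add_left_cancel this)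

include hm cinj in
lemma off_inj' {i : ZMod m} {a b : ℕ} (ha : a < m) (hb : b < m)
    (h : c (i - a) = c (i - b)) : a = b := by
  have h2 : (a : ZMod m) = (b : ZMod m) := sub_right_inj.mp (cinj h)
  exact (cast_inj_small hm ha hb).mp h2

include hm cadj in
lemma off_adj {i : ZMod m} {a b : ℕ} (ha : a < m) (hb : b < m) :
    G.Adj (c (i + a)) (c (i + b)) ↔
      (b = a + 1 ∨ a = b + 1 ∨ (a = 0 ∧ b = m - 1) ∨ (b = 0 ∧ a = m - 1)) := by
  rw [cadj]
  have h1 : (i + b = i + a + 1) ↔ ((b : ZMod m) = (a : ZMod m) + 1) := by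
    constructor
    · intro h; have : i + b - i = i + a + 1 - i := by rw [h]
      simpa [add_sub_cancel_left, add_assoc] using this
    · intro h; rw [add_assoc, ← h]
  have h2 : (i + a = i + b + 1) ↔ ((a : ZMod m) = (b : ZMod m) + 1) := by
    constructor
    · intro h; have : i + a - i = i + b + 1 - i := by rw [h]
      simpa [add_sub_cancel_left, add_assoc] using this
    · intro h; rw [add_assoc, ← h]
  rw [h1, h2, cast_succ_iff hm ha hb, cast_succ_iff hm hb ha]
  omega

include hm cadj in
lemma off_adj' {i : ZMod m} {a b : ℕ} (ha : a < m) (hb : b < m) :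
    G.Adj (c (i - a)) (c (i - b)) ↔
      (b = a + 1 ∨ a = b + 1 ∨ (a = 0 ∧ b = m - 1) ∨ (b = 0 ∧ a = m - 1)) := by
  rw [cadj]
  have h1 : (i - b = i - a + 1) ↔ ((a : ZMod m) = (b : ZMod m) + 1) := by
    constructor
    · intro h
      have : i - b - (i - a) = 1 := by rw [h]; ring
      have h2 : (a : ZMod m) - b = 1 := by rw [← this]; ring
      rw [← h2]; ring
    · intro h
      have h2 : (a : ZMod m) - b = 1 := by rw [h]; ring
      rw [← sub_eq_zero]
      rw [show i - b - (i - a + 1) = (a : ZMod m) - b - 1 from by ring, h2, sub_self]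
  have h2 : (i - a = i - b + 1) ↔ ((b : ZMod m) = (a : ZMod m) + 1) := by
    constructor
    · intro h
      have : i - a - (i - b) = 1 := by rw [h]; ring
      have h2 : (b : ZMod m) - a = 1 := by rw [← this]; ring
      rw [← h2]; ring
    · intro h
      have h2 : (b : ZMod m) - a = 1 := by rw [h]; ring
      rw [← sub_eq_zero]
      rw [show i - a - (i - b + 1) = (b : ZMod m) - a - 1 from by ring, h2, sub_self]
  rw [h1, h2, cast_succ_iff hm ha hb, cast_succ_iff hm hb ha]
  omega

end WithHole

lemma Bi_adj {i : ZMod m} {w : V} (hw : w ∈ Bi G m c i) : G.Adj w (c i) := by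
  have hw' : G.neighborSet w ∩ Set.range c = {c i} := hw
  have : c i ∈ G.neighborSet w ∩ Set.range c := by rw [hw']; rfl
  exact this.1

lemma Bi_adj_iff (cinj : Function.Injective c) {i : ZMod m} {w : V} (hw : w ∈ Bi G m c i)
    (j : ZMod m) : G.Adj w (c j) ↔ j = i := by
  have hw' : G.neighborSet w ∩ Set.range c = {c i} := hw
  constructor
  · intro h
    have : c j ∈ G.neighborSet w ∩ Set.range c := ⟨h, ⟨j, rfl⟩⟩
    rw [hw'] at this
    exact cinj this
  · rintro rfl; exact Bi_adj hw

lemma Ai_adj_left {i : ZMod m} {z : V} (hz : z ∈ Ai G m c i) : G.Adj z (c (i - 1)) := by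
  have hz' : G.neighborSet z ∩ Set.range c = {c (i - 1), c (i + 1)} := hz
  have : c (i - 1) ∈ G.neighborSet z ∩ Set.range c := by rw [hz']; left; rfl
  exact this.1

lemma Ai_adj_right {i : ZMod m} {z : V} (hz : z ∈ Ai G m c i) : G.Adj z (c (i + 1)) := by
  have hz' : G.neighborSet z ∩ Set.range c = {c (i - 1), c (i + 1)} := hz
  have : c (i + 1) ∈ G.neighborSet z ∩ Set.range c := by rw [hz']; right; rfl
  exact this.1

lemma Ai_adj_iff (cinj : Function.Injective c) {i : ZMod m} {z : V} (hz : z ∈ Ai G m c i)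
    (j : ZMod m) : G.Adj z (c j) ↔ (j = i - 1 ∨ j = i + 1) := by
  have hz' : G.neighborSet z ∩ Set.range c = {c (i - 1), c (i + 1)} := hz
  constructor
  · intro h
    have : c j ∈ G.neighborSet z ∩ Set.range c := ⟨h, ⟨j, rfl⟩⟩
    rw [hz'] at this
    rcases this with h' | h'
    · exact Or.inl (cinj h')
    · exact Or.inr (cinj h')
  · rintro (rfl | rfl)
    · exact Ai_adj_left hz
    · exact Ai_adj_right hz

lemma Bi_notin_range (hm : 10 ≤ m) (cinj : Function.Injective c)
    (cadj : ∀ x y : ZMod m, G.Adj (c x) (c y) ↔ (y = x + 1 ∨ x = y + 1))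
    {i : ZMod m} {w : V} (hw : w ∈ Bi G m c i) : w ∉ Set.range c := by
  rintro ⟨j, rfl⟩
  have h1 : G.Adj (c j) (c (j + 1)) := (cadj j (j + 1)).mpr (Or.inl rfl)
  have h2 : G.Adj (c j) (c (j - 1)) := (cadj j (j - 1)).mpr (Or.inr (by ring))
  have e1 : j + 1 = i := (Bi_adj_iff cinj hw _).mp h1
  have e2 : j - 1 = i := (Bi_adj_iff cinj hw _).mp h2
  have : ((2 : ℕ) : ZMod m) = ((0 : ℕ) : ZMod m) := by
    push_cast
    have h4 : j + 1 - (j - 1) = (2 : ZMod m) := by ring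
    rw [← h4, e1, e2, sub_self]
  have := (cast_inj_small hm (by omega) (by omega)).mp this
  omega

end Window
section Classify
variable {V : Type*} {G : SimpleGraph V} {m : ℕ} {c : ZMod m → V}

lemma classify_neighbor (hG : AlmostBPG G) (hC : ShortestHole G m c) (hm : 10 ≤ m)
    (i : ZMod m) (w z : V) (hw : w ∈ Bi G m c i) (hzw : G.Adj z w) (hzr : z ∉ Set.range c) :
    z ∈ Ai G m c i ∨ z ∈ Ai G m c (i - 2) ∨ z ∈ Bi G m c (i - 1) ∨
      z ∈ Bi G m c (i + 1) ∨ z ∈ Ai G m c (i + 2) := by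
  classical
  haveI : NeZero m := ⟨by omega⟩
  obtain ⟨hK3, hT2, hX2, hX3, hCk⟩ := hG
  have cinj : Function.Injective c := hC.1.2.1
  have cadj : ∀ x y : ZMod m, G.Adj (c x) (c y) ↔ (y = x + 1 ∨ x = y + 1) := hC.1.2.2
  have hwr : w ∉ Set.range c := Bi_notin_range hm cinj cadj hw
  have hwadj : ∀ j, G.Adj w (c j) ↔ j = i := Bi_adj_iff cinj hw
  set o : ℕ → V := fun t => c (i + t) with ho
  set o' : ℕ → V := fun t => c (i - t) with ho'
  have ho0 : o 0 = c i := by show c (i + ((0:ℕ):ZMod m)) = c i; norm_num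
  have ho'0 : o' 0 = c i := by show c (i - ((0:ℕ):ZMod m)) = c i; norm_num
  have hcmt : ∀ t : ℕ, t ≤ m → ((m - t : ℕ) : ZMod m) = -(t : ℕ) := fun t ht => cast_neg_nat hm ht
  have ho'o : ∀ t : ℕ, t ≤ m → o' t = o (m - t) := by
    intro t ht
    show c (i - (t : ℕ)) = c (i + ((m - t : ℕ) : ZMod m))
    rw [hcmt t ht]
    congr 1
    ring
  have hzci : ¬ G.Adj z (c i) := fun h => triangle_free hK3 h hzw (Bi_adj hw).symm
  set T : Finset ℕ := (Finset.range m).filter (fun t => G.Adj z (o t)) with hT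
  have hTmem : ∀ t, t ∈ T ↔ (t < m ∧ G.Adj z (o t)) := by
    intro t; rw [hT]; simp [Finset.mem_filter, Finset.mem_range]
  have hTlt : ∀ t ∈ T, t < m := fun t ht => ((hTmem t).mp ht).1
  have hTadj : ∀ t ∈ T, G.Adj z (o t) := fun t ht => ((hTmem t).mp ht).2
  have h0T : 0 ∉ T := fun h => hzci (ho0 ▸ hTadj 0 h)
  have hoT : ∀ t, t < m → (G.Adj z (o t) ↔ t ∈ T) := by
    intro t ht; rw [hTmem]; tauto
  have hall : ∀ j : ZMod m, G.Adj z (c j) → ((j - i).val ∈ T ∧ i + (((j - i).val : ℕ) : ZMod m) = j) := by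
    intro j hj
    have hv : (((j - i).val : ℕ) : ZMod m) = j - i := ZMod.natCast_rightInverse _
    have he : i + (((j - i).val : ℕ) : ZMod m) = j := by rw [hv]; ring
    refine ⟨(hTmem _).mpr ⟨ZMod.val_lt _, ?_⟩, he⟩
    show G.Adj z (c (i + ((j - i).val : ℕ)))
    rw [he]; exact hj
  have oadj := fun {a b : ℕ} (ha : a < m) (hb : b < m) => off_adj hm cadj (i := i) ha hb
  have oadj' := fun {a b : ℕ} (ha : a < m) (hb : b < m) => off_adj' hm cadj (i := i) ha hb
  have oinj := fun {a b : ℕ} (ha : a < m) (hb : b < m) =>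
    off_inj hm cinj (i := i) (a := a) (b := b) ha hb
  have oinj' := fun {a b : ℕ} (ha : a < m) (hb : b < m) =>
    off_inj' hm cinj (i := i) (a := a) (b := b) ha hb
  have hadjoo : ∀ a b : ℕ, a < m → b < m →
      (b = a + 1 ∨ a = b + 1 ∨ (a = 0 ∧ b = m - 1) ∨ (b = 0 ∧ a = m - 1)) →
      G.Adj (o a) (o b) := fun a b ha hb h => (oadj ha hb).mpr h
  have hnadjoo : ∀ a b : ℕ, a < m → b < m →
      ¬ (b = a + 1 ∨ a = b + 1 ∨ (a = 0 ∧ b = m - 1) ∨ (b = 0 ∧ a = m - 1)) →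
      ¬ G.Adj (o a) (o b) := fun a b ha hb h hadj => h ((oadj ha hb).mp hadj)
  have howadj : ∀ t, t < m → (G.Adj w (o t) ↔ t = 0) := by
    intro t ht
    rw [show o t = c (i + (t:ℕ)) from rfl, hwadj (i + t)]
    constructor
    · intro h
      have h2 : (t : ZMod m) = ((0 : ℕ) : ZMod m) := by
        have h3 : i + (t : ZMod m) = i + 0 := by rw [add_zero]; exact h
        have := add_left_cancel h3
        simpa using this
      exact (cast_inj_small hm ht (by omega)).mp h2
    · rintro rfl; norm_num
  have hnw : ∀ t, 0 < t → t < m → ¬ G.Adj w (o t) := by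
    intro t h0 hlt h
    have := (howadj t hlt).mp h
    omega
  have hwo : ∀ t : ℕ, w ≠ o t := by intro t h; exact hwr ⟨_, h.symm⟩
  have hzo : ∀ t : ℕ, z ≠ o t := by intro t h; exact hzr ⟨_, h.symm⟩
  have hwo' : ∀ t : ℕ, w ≠ o' t := by intro t h; exact hwr ⟨_, h.symm⟩
  have hzo' : ∀ t : ℕ, z ≠ o' t := by intro t h; exact hzr ⟨_, h.symm⟩
  have noconsec : ∀ t, t ∈ T → t + 1 ∈ T → False := by
    intro t h1 h2
    have ht1 : t + 1 < m := hTlt _ h2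
    exact triangle_free hK3 (hTadj t h1) (hTadj (t + 1) h2)
      (hadjoo t (t+1) (by omega) ht1 (by omega))
  -- membership builders
  have memB : ∀ j : ZMod m, (∀ j', G.Adj z (c j') ↔ j' = j) → z ∈ Bi G m c j := by
    intro j hj
    show G.neighborSet z ∩ Set.range c = {c j}
    ext x
    constructor
    · rintro ⟨hx, j', rfl⟩
      exact Set.mem_singleton_iff.mpr (by rw [(hj j').mp hx])
    · intro hx
      rw [Set.mem_singleton_iff] at hx
      subst hx
      exact ⟨(hj j).mpr rfl, ⟨j, rfl⟩⟩
  have memA : ∀ j : ZMod m, (∀ j', G.Adj z (c j') ↔ (j' = j - 1 ∨ j' = j + 1)) →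
      z ∈ Ai G m c j := by
    intro j hj
    show G.neighborSet z ∩ Set.range c = {c (j - 1), c (j + 1)}
    ext x
    constructor
    · rintro ⟨hx, j', rfl⟩
      rcases (hj j').mp hx with h | h
      · exact Or.inl (by rw [h])
      · exact Or.inr (by rw [h]; rfl)
    · intro hx
      rcases hx with h | h
      · rw [h]
        exact ⟨(hj (j-1)).mpr (Or.inl rfl), ⟨j - 1, rfl⟩⟩
      · rw [Set.mem_singleton_iff] at h
        rw [h]
        exact ⟨(hj (j+1)).mpr (Or.inr rfl), ⟨j + 1, rfl⟩⟩
  -- conversions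
  have hc1 : o 1 = c (i + 1) := by show c (i + ((1:ℕ):ZMod m)) = c (i + 1); norm_num
  have hc3 : o 3 = c (i + 3) := by show c (i + ((3:ℕ):ZMod m)) = c (i + 3); norm_num
  have hcm1 : o (m - 1) = c (i - 1) := by
    show c (i + ((m - 1 : ℕ) : ZMod m)) = c (i - 1)
    rw [hcmt 1 (by omega)]
    congr 1
    push_cast; ring
  have hcm3 : o (m - 3) = c (i - 3) := by
    show c (i + ((m - 3 : ℕ) : ZMod m)) = c (i - 3)
    rw [hcmt 3 (by omega)]
    congr 1
    push_cast; ring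
  -- T nonempty, else T2 config
  have hTne : T.Nonempty := by
    by_contra hne
    have hnoT : ∀ t, t < m → ¬ G.Adj z (o t) := by
      intro t ht h
      exact hne ⟨t, (hoT t ht).mp h⟩
    refine no_T2 hT2 (c i) (o 1) (o' 1) w (o 2) (o' 2) z
      (ho0 ▸ hadjoo 0 1 (by omega) (by omega) (by omega))
      (by rw [ho'o 1 (by omega)]
          exact ho0 ▸ hadjoo 0 (m-1) (by omega) (by omega) (by omega))
      (Bi_adj hw).symm
      (hadjoo 1 2 (by omega) (by omega) (by omega))
      (by rw [ho'o 1 (by omega), ho'o 2 (by omega)]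
          exact hadjoo (m-1) (m-2) (by omega) (by omega) (by omega))
      hzw.symm
      (ho0 ▸ hnadjoo 0 2 (by omega) (by omega) (by omega))
      (by rw [ho'o 2 (by omega)]
          exact ho0 ▸ hnadjoo 0 (m-2) (by omega) (by omega) (by omega))
      (fun h => hzci h.symm)
      (by rw [ho'o 1 (by omega)]
          exact hnadjoo 1 (m-1) (by omega) (by omega) (by omega))
      (fun h => hnw 1 (by omega) (by omega) h.symm)
      (by rw [ho'o 2 (by omega)]
          exact hnadjoo 1 (m-2) (by omega) (by omega) (by omega))
      (fun h => hnoT 1 (by omega) h.symm)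
      (by rw [ho'o 1 (by omega)]
          exact fun h => hnw (m-1) (by omega) (by omega) h.symm)
      (by rw [ho'o 1 (by omega)]
          exact hnadjoo (m-1) 2 (by omega) (by omega) (by omega))
      (by rw [ho'o 1 (by omega)]
          exact fun h => hnoT (m-1) (by omega) h.symm)
      (hnw 2 (by omega) (by omega))
      (by rw [ho'o 2 (by omega)]
          exact hnw (m-2) (by omega) (by omega))
      (by rw [ho'o 2 (by omega)]
          exact hnadjoo 2 (m-2) (by omega) (by omega) (by omega))
      (fun h => hnoT 2 (by omega) h.symm)
      (by rw [ho'o 2 (by omega)]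
          exact fun h => hnoT (m-2) (by omega) h.symm)
  set t0 := T.min' hTne with ht0def
  set t1 := T.max' hTne with ht1def
  have ht0T : t0 ∈ T := T.min'_mem hTne
  have ht1T : t1 ∈ T := T.max'_mem hTne
  have ht0min : ∀ t ∈ T, t0 ≤ t := fun t ht => T.min'_le t ht
  have ht1max : ∀ t ∈ T, t ≤ t1 := fun t ht => T.le_max' t ht
  have ht0pos : 1 ≤ t0 := by
    rcases Nat.eq_zero_or_pos t0 with h | h
    · exact absurd (h ▸ ht0T) h0T
    · omega
  have ht1lt : t1 < m := hTlt _ ht1T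
  have ht01 : t0 ≤ t1 := ht0min _ ht1T
  -- step A : min is 1 or ≥ m - 3
  have hstepA : t0 = 1 ∨ m - 3 ≤ t0 := by
    by_contra hcon
    push_neg at hcon
    obtain ⟨h1, h2⟩ := hcon
    refine arc_wz hC t0 (by omega) (by omega) o
      (fun k l hk hl h => oinj (by omega) (by omega) h)
      (fun k l hk hl => by rw [oadj (by omega) (by omega)]; omega)
      w z (by rw [ho0]; exact Bi_adj hw) (hTadj _ ht0T) hzw.symm
      (fun k hk0 hkd => hnw k hk0 (by omega))
      ?_ (fun k _ => hwo k) (fun k _ => hzo k)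
    intro k hk h
    have hkT : k ∈ T := (hoT k (by omega)).mp h
    have := ht0min k hkT
    omega
  -- step B : max is m - 1 or ≤ 3
  have hstepB : t1 = m - 1 ∨ t1 ≤ 3 := by
    by_contra hcon
    push_neg at hcon
    obtain ⟨h1, h2⟩ := hcon
    refine arc_wz hC (m - t1) (by omega) (by omega) o'
      (fun k l hk hl h => oinj' (by omega) (by omega) h)
      (fun k l hk hl => by rw [oadj' (by omega) (by omega)]; omega)
      w z (by rw [ho'0]; exact Bi_adj hw)
      (by show G.Adj z (o' (m - t1))
          rw [ho'o (m - t1) (by omega), show m - (m - t1) = t1 from by omega]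
          exact hTadj _ ht1T)
      hzw.symm
      (fun k hk0 hkd => by
        show ¬ G.Adj w (o' k)
        rw [ho'o k (by omega)]
        exact hnw (m - k) (by omega) (by omega))
      ?_ (fun k _ => hwo' k) (fun k _ => hzo' k)
    intro k hk h
    rcases Nat.eq_zero_or_pos k with rfl | hkpos
    · exact hzci (ho'0 ▸ (h : G.Adj z (o' 0)))
    · have h2 : G.Adj z (o' k) := h
      rw [ho'o k (by omega)] at h2
      have hkT : m - k ∈ T := (hoT _ (by omega)).mp h2
      have := ht1max _ hkT
      omega
  rcases hstepA with hA | hA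
  · have h1T : 1 ∈ T := hA ▸ ht0T
    have h2T : 2 ∉ T := fun h => noconsec 1 h1T (by norm_num at h ⊢; exact h)
    rcases hstepB with hB | hB
    · -- t0 = 1, t1 = m - 1 : middle must be empty (else contradiction), giving Ai i
      have hm1T : (m - 1) ∈ T := hB ▸ ht1T
      have hm2T : (m - 2) ∉ T := fun h =>
        noconsec (m - 2) h (by rw [show m - 2 + 1 = m - 1 from by omega]; exact hm1T)
      set M := T.filter (fun t => 2 ≤ t ∧ t ≤ m - 2) with hMdef
      by_cases hMne : M.Nonempty
      · exfalso
        have hMmem : ∀ t, t ∈ M ↔ (t ∈ T ∧ 2 ≤ t ∧ t ≤ m - 2) := by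
          intro t; rw [hMdef]; simp [Finset.mem_filter]
        set t2 := M.min' hMne with ht2def
        have ht2M : t2 ∈ M := M.min'_mem hMne
        obtain ⟨ht2T, ht2a, ht2b⟩ := (hMmem t2).mp ht2M
        have ht2 : t2 = 3 := by
          have hne2 : t2 ≠ 2 := fun h => h2T (h ▸ ht2T)
          by_contra hne3
          refine arc_z hC (t2 - 1) (by omega) (by omega) (fun k => o (1 + k))
            (fun k l hk hl h => by
              have := oinj (a := 1 + k) (b := 1 + l) (by omega) (by omega) h; omega)
            (fun k l hk hl => by rw [oadj (by omega) (by omega)]; omega)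
            z (hTadj 1 h1T) ?_ ?_ (fun k _ => hzo _)
          · show G.Adj z (o (1 + (t2 - 1)))
            rw [show 1 + (t2 - 1) = t2 from by omega]
            exact hTadj _ ht2T
          · intro k hk0 hkd h
            have hkT : 1 + k ∈ T := (hoT _ (by omega)).mp h
            have hkM : 1 + k ∈ M := (hMmem _).mpr ⟨hkT, by omega, by omega⟩
            have := M.min'_le _ hkM
            omega
        set t3 := M.max' hMne with ht3def
        have ht3M : t3 ∈ M := M.max'_mem hMne
        obtain ⟨ht3T, ht3a, ht3b⟩ := (hMmem t3).mp ht3M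
        have ht23 : t2 ≤ t3 := M.min'_le _ ht3M
        have ht3 : t3 = m - 3 := by
          have hne2 : t3 ≠ m - 2 := fun h => hm2T (h ▸ ht3T)
          by_contra hne3
          refine arc_z hC (m - 1 - t3) (by omega) (by omega) (fun k => o' (1 + k))
            (fun k l hk hl h => by
              have := oinj' (a := 1 + k) (b := 1 + l) (by omega) (by omega) h; omega)
            (fun k l hk hl => by rw [oadj' (by omega) (by omega)]; omega)
            z ?_ ?_ ?_ (fun k _ => hzo' _)
          · show G.Adj z (o' (1 + 0))
            rw [show (1:ℕ) + 0 = 1 from rfl, ho'o 1 (by omega)]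
            exact hTadj _ hm1T
          · show G.Adj z (o' (1 + (m - 1 - t3)))
            rw [ho'o (1 + (m - 1 - t3)) (by omega),
              show m - (1 + (m - 1 - t3)) = t3 from by omega]
            exact hTadj _ ht3T
          · intro k hk0 hkd h
            have h2 : G.Adj z (o' (1 + k)) := h
            rw [ho'o (1 + k) (by omega)] at h2
            have hkT : m - (1 + k) ∈ T := (hoT _ (by omega)).mp h2
            have hkM : m - (1 + k) ∈ M := (hMmem _).mpr ⟨hkT, by omega, by omega⟩
            have := M.le_max' _ hkM
            omega
        have h3T : 3 ∈ T := ht2 ▸ ht2T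
        have hm3T : (m - 3) ∈ T := ht3 ▸ ht3T
        have h4T : 4 ∉ T := fun h => noconsec 3 h3T (by norm_num at h ⊢; exact h)
        set M4 := T.filter (fun t => 4 ≤ t ∧ t ≤ m - 2) with hM4def
        have hM4mem : ∀ t, t ∈ M4 ↔ (t ∈ T ∧ 4 ≤ t ∧ t ≤ m - 2) := by
          intro t; rw [hM4def]; simp [Finset.mem_filter]
        have hM4ne : M4.Nonempty := ⟨m - 3, (hM4mem _).mpr ⟨hm3T, by omega, by omega⟩⟩
        set t4 := M4.min' hM4ne with ht4def
        have ht4M : t4 ∈ M4 := M4.min'_mem hM4ne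
        obtain ⟨ht4T, ht4a, ht4b⟩ := (hM4mem t4).mp ht4M
        have ht4 : t4 = 5 := by
          have hne4 : t4 ≠ 4 := fun h => h4T (h ▸ ht4T)
          by_contra hne5
          refine arc_z hC (t4 - 3) (by omega) (by omega) (fun k => o (3 + k))
            (fun k l hk hl h => by
              have := oinj (a := 3 + k) (b := 3 + l) (by omega) (by omega) h; omega)
            (fun k l hk hl => by rw [oadj (by omega) (by omega)]; omega)
            z (hTadj 3 h3T) ?_ ?_ (fun k _ => hzo _)
          · show G.Adj z (o (3 + (t4 - 3)))
            rw [show 3 + (t4 - 3) = t4 from by omega]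
            exact hTadj _ ht4T
          · intro k hk0 hkd h
            have hkT : 3 + k ∈ T := (hoT _ (by omega)).mp h
            have hkM : 3 + k ∈ M4 := (hM4mem _).mpr ⟨hkT, by omega, by omega⟩
            have := M4.min'_le _ hkM
            omega
        have h5T : 5 ∈ T := ht4 ▸ ht4T
        exact no_X3 hX3 (o 3) (o 2) (o 1) (c i) w z (o 5)
          (hadjoo 3 2 (by omega) (by omega) (by omega))
          (hadjoo 2 1 (by omega) (by omega) (by omega))
          (ho0 ▸ hadjoo 1 0 (by omega) (by omega) (by omega))
          (Bi_adj hw).symm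
          (hTadj 3 h3T).symm
          (hTadj 1 h1T).symm
          hzw.symm
          (hTadj 5 h5T)
          (hnadjoo 3 1 (by omega) (by omega) (by omega))
          (ho0 ▸ hnadjoo 3 0 (by omega) (by omega) (by omega))
          (fun h => hnw 3 (by omega) (by omega) h.symm)
          (hnadjoo 3 5 (by omega) (by omega) (by omega))
          (ho0 ▸ hnadjoo 2 0 (by omega) (by omega) (by omega))
          (fun h => hnw 2 (by omega) (by omega) h.symm)
          (fun h => h2T ((hoT 2 (by omega)).mp h.symm))
          (hnadjoo 2 5 (by omega) (by omega) (by omega))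
          (fun h => hnw 1 (by omega) (by omega) h.symm)
          (hnadjoo 1 5 (by omega) (by omega) (by omega))
          (fun h => hzci h.symm)
          (ho0 ▸ hnadjoo 0 5 (by omega) (by omega) (by omega))
          (hnw 5 (by omega) (by omega))
      · -- M empty : T = {1, m-1}, z ∈ Ai i
        left
        apply memA i
        intro j'
        constructor
        · intro h
          obtain ⟨htT, hje⟩ := hall j' h
          set t := (j' - i).val with htdev
          have htlt : t < m := hTlt _ htT
          have : t = 1 ∨ t = m - 1 := by
            by_contra hcon
            push_neg at hcon
            have h1 := ht0min _ htT
            have h2 := ht1max _ htT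
            exact hMne ⟨t, Finset.mem_filter.mpr ⟨htT, by omega, by omega⟩⟩
          rcases this with h' | h'
          · right
            rw [← hje, h']
            push_cast; ring
          · left
            rw [← hje, h', hcmt 1 (by omega)]
            push_cast; ring
        · rintro (rfl | rfl)
          · have := hTadj _ hm1T
            rwa [hcm1] at this
          · have := hTadj _ h1T
            rwa [hc1] at this
    · -- t0 = 1, t1 ≤ 3 : right side
      have ht1cases : t1 = 1 ∨ t1 = 2 ∨ t1 = 3 := by omega
      rcases ht1cases with h' | h' | h'
      · -- T = {1} : Bi (i+1)
        right; right; right; left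
        apply memB (i + 1)
        intro j'
        constructor
        · intro h
          obtain ⟨htT, hje⟩ := hall j' h
          have h1 := ht0min _ htT
          have h2 := ht1max _ htT
          have : (j' - i).val = 1 := by omega
          rw [← hje, this]
          push_cast; ring
        · rintro rfl
          have := hTadj _ h1T
          rwa [hc1] at this
      · exact absurd (h' ▸ ht1T) h2T
      · -- T = {1, 3} : Ai (i+2)
        have h3T : 3 ∈ T := h' ▸ ht1T
        right; right; right; right
        apply memA (i + 2)
        have e1 : (i + 2) - 1 = i + 1 := by ring
        have e2 : (i + 2) + 1 = i + 3 := by ring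
        intro j'
        rw [e1, e2]
        constructor
        · intro h
          obtain ⟨htT, hje⟩ := hall j' h
          have h1 := ht0min _ htT
          have h2 := ht1max _ htT
          have h3 : (j' - i).val ≠ 2 := fun hh => h2T (hh ▸ htT)
          have : (j' - i).val = 1 ∨ (j' - i).val = 3 := by omega
          rcases this with h'' | h''
          · left; rw [← hje, h'']; push_cast; ring
          · right; rw [← hje, h'']; push_cast; ring
        · rintro (rfl | rfl)
          · have := hTadj _ h1T
            rwa [hc1] at this
          · have := hTadj _ h3T
            rwa [hc3] at this
  · -- t0 ≥ m - 3 : left side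
    have hB : t1 = m - 1 := by
      rcases hstepB with h' | h'
      · exact h'
      · omega
    have hm1T : (m - 1) ∈ T := hB ▸ ht1T
    have hm2T : (m - 2) ∉ T := fun h =>
      noconsec (m - 2) h (by rw [show m - 2 + 1 = m - 1 from by omega]; exact hm1T)
    have ht0cases : t0 = m - 3 ∨ t0 = m - 2 ∨ t0 = m - 1 := by omega
    rcases ht0cases with h' | h' | h'
    · -- T = {m-3, m-1} : Ai (i-2)
      have hm3T : (m - 3) ∈ T := h' ▸ ht0T
      right; left
      apply memA (i - 2)
      have e1 : (i - 2) - 1 = i - 3 := by ring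
      have e2 : (i - 2) + 1 = i - 1 := by ring
      intro j'
      rw [e1, e2]
      constructor
      · intro h
        obtain ⟨htT, hje⟩ := hall j' h
        have h1 := ht0min _ htT
        have h2 := ht1max _ htT
        have h3 : (j' - i).val ≠ m - 2 := fun hh => hm2T (hh ▸ htT)
        have : (j' - i).val = m - 3 ∨ (j' - i).val = m - 1 := by omega
        rcases this with h'' | h''
        · left; rw [← hje, h'', hcmt 3 (by omega)]; push_cast; ring
        · right; rw [← hje, h'', hcmt 1 (by omega)]; push_cast; ring
      · rintro (rfl | rfl)
        · have := hTadj _ hm3T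
          rwa [hcm3] at this
        · have := hTadj _ hm1T
          rwa [hcm1] at this
    · exact absurd (h' ▸ ht0T) hm2T
    · -- T = {m-1} : Bi (i-1)
      right; right; left
      apply memB (i - 1)
      intro j'
      constructor
      · intro h
        obtain ⟨htT, hje⟩ := hall j' h
        have h1 := ht0min _ htT
        have h2 := ht1max _ htT
        have : (j' - i).val = m - 1 := by omega
        rw [← hje, this, hcmt 1 (by omega)]
        push_cast; ring
      · rintro rfl
        have := hTadj _ hm1T
        rwa [hcm1] at this

end Classify
section Claims
variable {V : Type*} {G : SimpleGraph V} {m : ℕ} {c : ZMod m → V}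

lemma zmod_shift_ne (hm : 10 ≤ m) {x y : ZMod m} (k : ℕ) (h1 : 1 ≤ k) (h2 : k ≤ 9)
    (hxy : x - y = ((k : ℕ) : ZMod m)) : x ≠ y := by
  intro h
  rw [h, sub_self] at hxy
  have : ((0 : ℕ) : ZMod m) = ((k : ℕ) : ZMod m) := by rw [← hxy]; norm_num
  have := (cast_inj_small hm (by omega) (by omega)).mp this
  omega

lemma cadj_ne (cadj : ∀ x y : ZMod m, G.Adj (c x) (c y) ↔ (y = x + 1 ∨ x = y + 1))
    {x y : ZMod m} (h1 : y ≠ x + 1) (h2 : x ≠ y + 1) : ¬ G.Adj (c x) (c y) := by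
  rw [cadj]; tauto

lemma Ai_nadj (cinj : Function.Injective c) {j x : ZMod m} {u : V} (hu : u ∈ Ai G m c j)
    (h1 : x ≠ j - 1) (h2 : x ≠ j + 1) : ¬ G.Adj u (c x) := by
  rw [Ai_adj_iff cinj hu]; tauto

lemma Bi_nadj (cinj : Function.Injective c) {j x : ZMod m} {u : V} (hu : u ∈ Bi G m c j)
    (h1 : x ≠ j) : ¬ G.Adj u (c x) := by
  rw [Bi_adj_iff cinj hu]; exact h1

/-- Nesting claim via T2. -/
lemma nest_claim (hK3 : ¬ ContainsInduced graphK3 G) (hT2 : ¬ ContainsInduced graphT2 G)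
    {x0 x1 x2 w w' u u' : V}
    (p01 : G.Adj x0 x1) (p12 : G.Adj x1 x2) (p02 : ¬ G.Adj x0 x2)
    (hw0 : G.Adj w x0) (hw'0 : G.Adj w' x0)
    (hwx1 : ¬ G.Adj w x1) (hwx2 : ¬ G.Adj w x2)
    (hw'x1 : ¬ G.Adj w' x1) (hw'x2 : ¬ G.Adj w' x2)
    (huw : G.Adj u w) (hunw' : ¬ G.Adj u w')
    (hux0 : ¬ G.Adj u x0) (hux1 : ¬ G.Adj u x1) (hux2 : ¬ G.Adj u x2)
    (hu'w' : G.Adj u' w') (hu'nw : ¬ G.Adj u' w)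
    (hu'x0 : ¬ G.Adj u' x0) (hu'x1 : ¬ G.Adj u' x1) (hu'x2 : ¬ G.Adj u' x2)
    (huu' : ¬ G.Adj u u') : False := by
  have nww' : ¬ G.Adj w w' := fun h => triangle_free hK3 h hw0 hw'0
  exact no_T2 hT2 x0 x1 w w' x2 u u'
    p01 hw0.symm hw'0.symm p12 huw.symm hu'w'.symm
    p02 (fun h => hux0 h.symm) (fun h => hu'x0 h.symm)
    (fun h => hwx1 h.symm) (fun h => hw'x1 h.symm) (fun h => hux1 h.symm)
    (fun h => hu'x1 h.symm) nww' hwx2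
    (fun h => hu'nw h.symm) hw'x2 (fun h => hunw' h.symm)
    (fun h => hux2 h.symm) (fun h => hu'x2 h.symm) huu'

/-- Cross claim via X2 (or a triangle). -/
lemma cross_claim (hK3 : ¬ ContainsInduced graphK3 G) (hX2 : ¬ ContainsInduced graphX2 G)
    {x0 x1 x2 w w' u v : V}
    (p01 : G.Adj x0 x1) (p12 : G.Adj x1 x2) (p02 : ¬ G.Adj x0 x2)
    (hw0 : G.Adj w x0) (hw'0 : G.Adj w' x0)
    (hwx1 : ¬ G.Adj w x1) (hwx2 : ¬ G.Adj w x2)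
    (hw'x1 : ¬ G.Adj w' x1) (hw'x2 : ¬ G.Adj w' x2)
    (huw : G.Adj u w) (hunw' : ¬ G.Adj u w')
    (hux0 : ¬ G.Adj u x0) (hux1 : ¬ G.Adj u x1) (hux2 : ¬ G.Adj u x2)
    (hvw : G.Adj v w) (hvx1 : G.Adj v x1) (hvnw' : ¬ G.Adj v w')
    (hvx0 : ¬ G.Adj v x0) (hvx2 : ¬ G.Adj v x2) : False := by
  have nww' : ¬ G.Adj w w' := fun h => triangle_free hK3 h hw0 hw'0
  by_cases huv : G.Adj u v
  · exact triangle_free hK3 huv huw hvw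
  · exact no_X2 hX2 x1 x0 w v x2 w' u
      p01.symm hw0.symm hvw.symm hvx1.symm p12 hw'0.symm huw.symm
      (fun h => hwx1 h.symm) (fun h => hw'x1 h.symm) (fun h => hux1 h.symm)
      (fun h => hvx0 h.symm) p02 (fun h => hux0 h.symm)
      hwx2 nww' hvx2 hvnw' (fun h => huv h.symm)
      (fun h => hw'x2 h.symm) (fun h => hux2 h.symm) (fun h => hunw' h.symm)

/-- A vertex of `Ai i` is adjacent to every vertex of `Bi i`. -/
lemma Ai_adj_allB (hG : AlmostBPG G) (hC : ShortestHole G m c) (hm : 10 ≤ m)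
    (i : ZMod m) (z w' : V) (hz : z ∈ Ai G m c i) (hw' : w' ∈ Bi G m c i) :
    G.Adj z w' := by
  obtain ⟨hK3, hT2, hX2, hX3, hCk⟩ := hG
  have cinj : Function.Injective c := hC.1.2.1
  have cadj : ∀ x y : ZMod m, G.Adj (c x) (c y) ↔ (y = x + 1 ∨ x = y + 1) := hC.1.2.2
  have sne : ∀ (x y : ZMod m) (k : ℕ), 1 ≤ k → k ≤ 9 → (x - y = ((k : ℕ) : ZMod m)) → x ≠ y :=
    fun x y k h1 h2 h3 => zmod_shift_ne hm k h1 h2 h3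
  by_cases hr : z ∈ Set.range c
  · obtain ⟨j, rfl⟩ := hr
    have h1 : G.Adj (c j) (c (j + 1)) := (cadj _ _).mpr (Or.inl rfl)
    have h2 : G.Adj (c j) (c (j - 1)) := (cadj _ _).mpr (Or.inr (by ring))
    have e1 := (Ai_adj_iff cinj hz _).mp h1
    have e2 := (Ai_adj_iff cinj hz _).mp h2
    have hji : j = i := by
      rcases e1 with e1 | e1
      · exfalso
        rcases e2 with e2 | e2
        · exact (sne _ _ 2 (by omega) (by omega) (by push_cast; ring))
            (e1.trans e2.symm : j + 1 = j - 1)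
        · have h4 : ((4 : ℕ) : ZMod m) = ((0 : ℕ) : ZMod m) := by
            have h3 : (j + 1) - (j - 1) = (i - 1) - (i + 1) := by rw [e1, e2]
            push_cast
            linear_combination h3
          exact absurd ((cast_inj_small hm (by omega) (by omega)).mp h4) (by omega)
      · exact add_right_cancel e1
    subst hji
    exact (Bi_adj hw').symm
  · by_contra hne
    refine no_X2 hX2 (c (i+1)) (c i) (c (i-1)) z (c (i+2)) w' (c (i-2))
      ((cadj _ _).mpr (Or.inr rfl))
      ((cadj _ _).mpr (Or.inr (by ring)))
      (Ai_adj_left hz).symm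
      (Ai_adj_right hz).symm
      ((cadj _ _).mpr (Or.inl (by ring)))
      (Bi_adj hw').symm
      ((cadj _ _).mpr (Or.inr (by ring)))
      ?_ ?_ ?_ ?_ ?_ ?_ ?_ ?_ ?_ ?_ ?_ ?_ ?_ ?_
    · exact cadj_ne cadj (sne _ _ 3 (by omega) (by omega) (by push_cast; ring)).symm
        (sne _ _ 1 (by omega) (by omega) (by push_cast; ring))
    · exact fun h => (Bi_nadj cinj hw'
        (sne _ _ 1 (by omega) (by omega) (by push_cast; ring))) h.symm
    · exact cadj_ne cadj (sne _ _ 4 (by omega) (by omega) (by push_cast; ring)).symm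
        (sne _ _ 2 (by omega) (by omega) (by push_cast; ring))
    · exact fun h => (Ai_nadj cinj hz
        (sne _ _ 1 (by omega) (by omega) (by push_cast; ring))
        (sne _ _ 1 (by omega) (by omega) (by push_cast; ring)).symm) h.symm
    · exact cadj_ne cadj (sne _ _ 1 (by omega) (by omega) (by push_cast; ring))
        (sne _ _ 3 (by omega) (by omega) (by push_cast; ring)).symm
    · exact cadj_ne cadj (sne _ _ 3 (by omega) (by omega) (by push_cast; ring)).symm
        (sne _ _ 1 (by omega) (by omega) (by push_cast; ring))
    · exact cadj_ne cadj (sne _ _ 2 (by omega) (by omega) (by push_cast; ring))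
        (sne _ _ 4 (by omega) (by omega) (by push_cast; ring)).symm
    · exact fun h => (Bi_nadj cinj hw'
        (sne _ _ 1 (by omega) (by omega) (by push_cast; ring)).symm) h.symm
    · exact Ai_nadj cinj hz
        (sne _ _ 3 (by omega) (by omega) (by push_cast; ring))
        (sne _ _ 1 (by omega) (by omega) (by push_cast; ring))
    · exact hne
    · exact Ai_nadj cinj hz
        (sne _ _ 1 (by omega) (by omega) (by push_cast; ring)).symm
        (sne _ _ 3 (by omega) (by omega) (by push_cast; ring)).symm
    · exact fun h => (Bi_nadj cinj hw'
        (sne _ _ 2 (by omega) (by omega) (by push_cast; ring))) h.symm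
    · exact cadj_ne cadj (sne _ _ 5 (by omega) (by omega) (by push_cast; ring)).symm
        (sne _ _ 3 (by omega) (by omega) (by push_cast; ring))
    · exact Bi_nadj cinj hw' (sne _ _ 2 (by omega) (by omega) (by push_cast; ring)).symm

end Claims
theorem ltB_strict_partial_order {V : Type*} (G : SimpleGraph V) (hconn : G.Connected) (hG : AlmostBPG G)
    (m : ℕ) (c : ZMod m → V) (hm : 10 ≤ m) (hC : ShortestHole G m c) :
    ∀ i : ZMod m,
      (∀ w ∈ Bi G m c i, ¬ ltB G m c i w w) ∧
        (∀ w ∈ Bi G m c i, ∀ w' ∈ Bi G m c i, ∀ w'' ∈ Bi G m c i,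
          ltB G m c i w w' → ltB G m c i w' w'' → ltB G m c i w w'') ∧
        ∀ w ∈ Bi G m c i, ∀ w' ∈ Bi G m c i,
          ((¬ ltB G m c i w w' ∧ ¬ ltB G m c i w' w) ↔
            G.neighborSet w = G.neighborSet w') := by
  intro i
  have cinj : Function.Injective c := hC.1.2.1
  have cadj : ∀ x y : ZMod m, G.Adj (c x) (c y) ↔ (y = x + 1 ∨ x = y + 1) := hC.1.2.2
  have hK3 := hG.1
  have hT2 := hG.2.1
  have hX2 := hG.2.2.1
  have sne : ∀ (x y : ZMod m) (k : ℕ), 1 ≤ k → k ≤ 9 → (x - y = ((k : ℕ) : ZMod m)) → x ≠ y :=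
    fun x y k h1 h2 h3 => zmod_shift_ne hm k h1 h2 h3
  have hLm1 : ∀ u ∈ Ai G m c (i-2) ∪ Bi G m c (i-1), G.Adj u (c (i - 1)) := by
    rintro u (hu | hu)
    · exact (Ai_adj_iff cinj hu _).mpr (Or.inr (by ring))
    · exact (Bi_adj_iff cinj hu _).mpr rfl
  have hLn : ∀ u ∈ Ai G m c (i-2) ∪ Bi G m c (i-1), ∀ x : ZMod m,
      x ≠ i - 3 → x ≠ i - 1 → ¬ G.Adj u (c x) := by
    rintro u (hu | hu) x h1 h2
    · exact Ai_nadj cinj hu (by rw [show i - 2 - 1 = i - 3 from by ring]; exact h1)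
        (by rw [show i - 2 + 1 = i - 1 from by ring]; exact h2)
    · exact Bi_nadj cinj hu h2
  have hRp1 : ∀ u ∈ Bi G m c (i+1) ∪ Ai G m c (i+2), G.Adj u (c (i + 1)) := by
    rintro u (hu | hu)
    · exact (Bi_adj_iff cinj hu _).mpr rfl
    · exact (Ai_adj_iff cinj hu _).mpr (Or.inl (by ring))
  have hRn : ∀ u ∈ Bi G m c (i+1) ∪ Ai G m c (i+2), ∀ x : ZMod m,
      x ≠ i + 1 → x ≠ i + 3 → ¬ G.Adj u (c x) := by
    rintro u (hu | hu) x h1 h2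
    · exact Bi_nadj cinj hu h1
    · exact Ai_nadj cinj hu (by rw [show i + 2 - 1 = i + 1 from by ring]; exact h1)
        (by rw [show i + 2 + 1 = i + 3 from by ring]; exact h2)
  have NL : ∀ u u' w w' : V, u ∈ Ai G m c (i-2) ∪ Bi G m c (i-1) →
      u' ∈ Ai G m c (i-2) ∪ Bi G m c (i-1) → w ∈ Bi G m c i → w' ∈ Bi G m c i →
      G.Adj u w → ¬ G.Adj u w' → G.Adj u' w' → G.Adj u' w := by
    intro u u' w w' hu hu' hw hw' h1 h2 h3
    by_contra h4
    exact nest_claim hK3 hT2 (x0 := c i) (x1 := c (i+1)) (x2 := c (i+2))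
      ((cadj _ _).mpr (Or.inl rfl))
      ((cadj _ _).mpr (Or.inl (by ring)))
      (cadj_ne cadj (sne _ _ 1 (by omega) (by omega) (by push_cast; ring))
        (sne _ _ 3 (by omega) (by omega) (by push_cast; ring)).symm)
      (Bi_adj hw) (Bi_adj hw')
      (Bi_nadj cinj hw (sne _ _ 1 (by omega) (by omega) (by push_cast; ring)))
      (Bi_nadj cinj hw (sne _ _ 2 (by omega) (by omega) (by push_cast; ring)))
      (Bi_nadj cinj hw' (sne _ _ 1 (by omega) (by omega) (by push_cast; ring)))
      (Bi_nadj cinj hw' (sne _ _ 2 (by omega) (by omega) (by push_cast; ring)))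
      h1 h2
      (hLn u hu i (sne _ _ 3 (by omega) (by omega) (by push_cast; ring))
        (sne _ _ 1 (by omega) (by omega) (by push_cast; ring)))
      (hLn u hu (i+1) (sne _ _ 4 (by omega) (by omega) (by push_cast; ring))
        (sne _ _ 2 (by omega) (by omega) (by push_cast; ring)))
      (hLn u hu (i+2) (sne _ _ 5 (by omega) (by omega) (by push_cast; ring))
        (sne _ _ 3 (by omega) (by omega) (by push_cast; ring)))
      h3 h4
      (hLn u' hu' i (sne _ _ 3 (by omega) (by omega) (by push_cast; ring))
        (sne _ _ 1 (by omega) (by omega) (by push_cast; ring)))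
      (hLn u' hu' (i+1) (sne _ _ 4 (by omega) (by omega) (by push_cast; ring))
        (sne _ _ 2 (by omega) (by omega) (by push_cast; ring)))
      (hLn u' hu' (i+2) (sne _ _ 5 (by omega) (by omega) (by push_cast; ring))
        (sne _ _ 3 (by omega) (by omega) (by push_cast; ring)))
      (fun h => triangle_free hK3 h (hLm1 u hu) (hLm1 u' hu'))
  have NR : ∀ u u' w w' : V, u ∈ Bi G m c (i+1) ∪ Ai G m c (i+2) →
      u' ∈ Bi G m c (i+1) ∪ Ai G m c (i+2) → w ∈ Bi G m c i → w' ∈ Bi G m c i →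
      G.Adj u w → ¬ G.Adj u w' → G.Adj u' w' → G.Adj u' w := by
    intro u u' w w' hu hu' hw hw' h1 h2 h3
    by_contra h4
    exact nest_claim hK3 hT2 (x0 := c i) (x1 := c (i-1)) (x2 := c (i-2))
      ((cadj _ _).mpr (Or.inr (by ring)))
      ((cadj _ _).mpr (Or.inr (by ring)))
      (cadj_ne cadj (sne _ _ 3 (by omega) (by omega) (by push_cast; ring)).symm
        (sne _ _ 1 (by omega) (by omega) (by push_cast; ring)))
      (Bi_adj hw) (Bi_adj hw')
      (Bi_nadj cinj hw (sne _ _ 1 (by omega) (by omega) (by push_cast; ring)).symm)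
      (Bi_nadj cinj hw (sne _ _ 2 (by omega) (by omega) (by push_cast; ring)).symm)
      (Bi_nadj cinj hw' (sne _ _ 1 (by omega) (by omega) (by push_cast; ring)).symm)
      (Bi_nadj cinj hw' (sne _ _ 2 (by omega) (by omega) (by push_cast; ring)).symm)
      h1 h2
      (hRn u hu i (sne _ _ 1 (by omega) (by omega) (by push_cast; ring)).symm
        (sne _ _ 3 (by omega) (by omega) (by push_cast; ring)).symm)
      (hRn u hu (i-1) (sne _ _ 2 (by omega) (by omega) (by push_cast; ring)).symm
        (sne _ _ 4 (by omega) (by omega) (by push_cast; ring)).symm)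
      (hRn u hu (i-2) (sne _ _ 3 (by omega) (by omega) (by push_cast; ring)).symm
        (sne _ _ 5 (by omega) (by omega) (by push_cast; ring)).symm)
      h3 h4
      (hRn u' hu' i (sne _ _ 1 (by omega) (by omega) (by push_cast; ring)).symm
        (sne _ _ 3 (by omega) (by omega) (by push_cast; ring)).symm)
      (hRn u' hu' (i-1) (sne _ _ 2 (by omega) (by omega) (by push_cast; ring)).symm
        (sne _ _ 4 (by omega) (by omega) (by push_cast; ring)).symm)
      (hRn u' hu' (i-2) (sne _ _ 3 (by omega) (by omega) (by push_cast; ring)).symm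
        (sne _ _ 5 (by omega) (by omega) (by push_cast; ring)).symm)
      (fun h => triangle_free hK3 h (hRp1 u hu) (hRp1 u' hu'))
  have CR : ∀ u v w w' : V, u ∈ Ai G m c (i-2) ∪ Bi G m c (i-1) →
      v ∈ Bi G m c (i+1) ∪ Ai G m c (i+2) → w ∈ Bi G m c i → w' ∈ Bi G m c i →
      G.Adj u w → ¬ G.Adj u w' → G.Adj v w → ¬ G.Adj v w' → False := by
    intro u v w w' hu hv hw hw' h1 h2 h3 h4
    exact cross_claim hK3 hX2 (x0 := c i) (x1 := c (i+1)) (x2 := c (i+2))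
      ((cadj _ _).mpr (Or.inl rfl))
      ((cadj _ _).mpr (Or.inl (by ring)))
      (cadj_ne cadj (sne _ _ 1 (by omega) (by omega) (by push_cast; ring))
        (sne _ _ 3 (by omega) (by omega) (by push_cast; ring)).symm)
      (Bi_adj hw) (Bi_adj hw')
      (Bi_nadj cinj hw (sne _ _ 1 (by omega) (by omega) (by push_cast; ring)))
      (Bi_nadj cinj hw (sne _ _ 2 (by omega) (by omega) (by push_cast; ring)))
      (Bi_nadj cinj hw' (sne _ _ 1 (by omega) (by omega) (by push_cast; ring)))
      (Bi_nadj cinj hw' (sne _ _ 2 (by omega) (by omega) (by push_cast; ring)))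
      h1 h2
      (hLn u hu i (sne _ _ 3 (by omega) (by omega) (by push_cast; ring))
        (sne _ _ 1 (by omega) (by omega) (by push_cast; ring)))
      (hLn u hu (i+1) (sne _ _ 4 (by omega) (by omega) (by push_cast; ring))
        (sne _ _ 2 (by omega) (by omega) (by push_cast; ring)))
      (hLn u hu (i+2) (sne _ _ 5 (by omega) (by omega) (by push_cast; ring))
        (sne _ _ 3 (by omega) (by omega) (by push_cast; ring)))
      h3 (hRp1 v hv) h4
      (hRn v hv i (sne _ _ 1 (by omega) (by omega) (by push_cast; ring)).symm
        (sne _ _ 3 (by omega) (by omega) (by push_cast; ring)).symm)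
      (hRn v hv (i+2) (sne _ _ 1 (by omega) (by omega) (by push_cast; ring))
        (sne _ _ 1 (by omega) (by omega) (by push_cast; ring)).symm)
  refine ⟨?_, ?_, ?_⟩
  · rintro w _ (⟨u, _, h1, h2⟩ | ⟨u, _, h1, h2⟩) <;> exact h2 h1
  · intro w hw w' hw' w'' hw'' h1 h2
    rcases h1 with ⟨u, hu, ha, hb⟩ | ⟨v, hv, ha, hb⟩ <;>
      rcases h2 with ⟨u2, hu2, hc, hd⟩ | ⟨v2, hv2, hc, hd⟩
    · exact Or.inl ⟨u, hu, ha, fun hcon => hd (NL u u2 w'' w' hu hu2 hw'' hw' hcon hb hc)⟩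
    · exact Or.inr ⟨v2, hv2, hc, fun hcon => CR u v2 w w' hu hv2 hw hw' ha hb hcon hd⟩
    · by_cases hc2 : G.Adj u2 w
      · exact Or.inl ⟨u2, hu2, hc2, hd⟩
      · exact (CR u2 v w' w hu2 hv hw' hw hc hc2 ha hb).elim
    · exact Or.inr ⟨v2, hv2, hc, fun hcon => hb (NR v2 v w w' hv2 hv hw hw' hcon hd ha)⟩
  · intro w hw w' hw'
    constructor
    · rintro ⟨h1, h2⟩
      have key : ∀ (a b : V), a ∈ Bi G m c i → b ∈ Bi G m c i → ¬ ltB G m c i a b →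
          ¬ ltB G m c i b a → ∀ x, G.Adj a x → G.Adj b x := by
        intro a b ha hb hab hba x hx
        by_cases hr : x ∈ Set.range c
        · obtain ⟨j, rfl⟩ := hr
          have hj : j = i := (Bi_adj_iff cinj ha j).mp hx
          rw [hj]
          exact Bi_adj hb
        · rcases classify_neighbor hG hC hm i a x ha hx.symm hr with h | h | h | h | h
          · exact (Ai_adj_allB hG hC hm i x b h hb).symm
          · by_contra hxb
            exact hab (Or.inl ⟨x, Set.mem_union_left _ h, hx.symm, fun hh => hxb hh.symm⟩)
          · by_contra hxb
            exact hab (Or.inl ⟨x, Set.mem_union_right _ h, hx.symm, fun hh => hxb hh.symm⟩)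
          · by_contra hxb
            exact hba (Or.inr ⟨x, Set.mem_union_left _ h, hx.symm, fun hh => hxb hh.symm⟩)
          · by_contra hxb
            exact hba (Or.inr ⟨x, Set.mem_union_right _ h, hx.symm, fun hh => hxb hh.symm⟩)
      ext x
      simp only [SimpleGraph.mem_neighborSet]
      exact ⟨fun h => key w w' hw hw' h1 h2 x h, fun h => key w' w hw' hw h2 h1 x h⟩
    · intro hN
      have hsw : ∀ u : V, G.Adj u w ↔ G.Adj u w' := by
        intro u
        constructor
        · intro h
          have h2 : u ∈ G.neighborSet w := h.symm
          rw [hN] at h2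
          exact h2.symm
        · intro h
          have h2 : u ∈ G.neighborSet w' := h.symm
          rw [← hN] at h2
          exact h2.symm
      constructor
      · rintro (⟨u, _, h1, h2⟩ | ⟨u, _, h1, h2⟩)
        · exact h2 ((hsw u).mp h1)
        · exact h2 ((hsw u).mpr h1)
      · rintro (⟨u, _, h1, h2⟩ | ⟨u, _, h1, h2⟩)
        · exact h2 ((hsw u).mpr h1)
        · exact h2 ((hsw u).mp h1)
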